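/- (Linearised error state matrix of the EqF example.) Let S = [[0, −1], [1, 0]], fix x° ∈ ℝ² with x° ≠ 0 and v° ∈ ℝ², and define g : ℝ² ∖ {0} → ℝ² by g(e) = ( eᵀ(S⬝v°)/(eᵀe) − x°ᵀ(S⬝v°)/(x°ᵀx°) ) • (Sᵀ⬝e) + ( eᵀv°/(eᵀe) − x°ᵀv°/(x°ᵀx°) ) • e. Then g is Fréchet differentiable at x° and its derivative is the linear map given by the matrix A = (1/‖x°‖⁴) · ( ‖x°‖²( −(S⬝x°)(S⬝v°)ᵀ + x°v°ᵀ ) + 2 (x°ᵀ(S⬝v°)) (S⬝x°)x°ᵀ − 2 (x°ᵀv°) x°x°ᵀ ), where ‖x°‖² = x°ᵀx° and u wᵀ denotes the outer product matrix. -/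

import Mathlib

set_option maxHeartbeats 2000000

open Matrix

/-- The matrix `S = [[0,−1],[1,0]]`. -/
def Smat : Matrix (Fin 2) (Fin 2) ℝ := !![0, -1; 1, 0]

/-- dot with fixed right vector, as a continuous linear map -/
noncomputable def dotCLM (w : Fin 2 → ℝ) : (Fin 2 → ℝ) →L[ℝ] ℝ :=
  LinearMap.toContinuousLinearMap
    { toFun := fun e => e ⬝ᵥ w
      map_add' := fun a b => add_dotProduct a b w
      map_smul' := fun c a => smul_dotProduct c a w }

@[simp] lemma dotCLM_apply (w e : Fin 2 → ℝ) : dotCLM w e = e ⬝ᵥ w := rfl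

lemma hasFDerivAt_dot (w x : Fin 2 → ℝ) :
    HasFDerivAt (fun e : Fin 2 → ℝ => e ⬝ᵥ w) (dotCLM w) x :=
  (dotCLM w).hasFDerivAt

theorem slam2d_linearised_state_matrix
    (xo : Fin 2 → ℝ) (hxo : xo ≠ 0) (vo : Fin 2 → ℝ) :
    ∃ L : (Fin 2 → ℝ) →L[ℝ] (Fin 2 → ℝ),
      HasFDerivAt
        (fun e : Fin 2 → ℝ =>
          (e ⬝ᵥ (Smat *ᵥ vo) / (e ⬝ᵥ e) - xo ⬝ᵥ (Smat *ᵥ vo) / (xo ⬝ᵥ xo)) • (Smatᵀ *ᵥ e)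
            + (e ⬝ᵥ vo / (e ⬝ᵥ e) - xo ⬝ᵥ vo / (xo ⬝ᵥ xo)) • e)
        L xo
      ∧ ∀ u : Fin 2 → ℝ,
          L u = (((xo ⬝ᵥ xo) ^ 2)⁻¹ •
            ((xo ⬝ᵥ xo) • (-(vecMulVec (Smat *ᵥ xo) (Smat *ᵥ vo)) + vecMulVec xo vo)
              + (2 * (xo ⬝ᵥ (Smat *ᵥ vo))) • vecMulVec (Smat *ᵥ xo) xo
              - (2 * (xo ⬝ᵥ vo)) • vecMulVec xo xo)) *ᵥ u := by
  have hST : Smatᵀ = !![0, 1; -1, 0] := by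
    ext i j; fin_cases i <;> fin_cases j <;> simp [Smat]
  rw [hST]
  have hq : xo ⬝ᵥ xo ≠ 0 := fun h => hxo (by rwa [dotProduct_self_eq_zero] at h)
  -- derivative of e ↦ e ⬝ᵥ e
  have hproj0 : HasFDerivAt (fun e : Fin 2 → ℝ => e 0) (ContinuousLinearMap.proj (R := ℝ) (φ := fun _ : Fin 2 => ℝ) 0) xo :=
    hasFDerivAt_apply (𝕜 := ℝ) 0 xo
  have hproj1 : HasFDerivAt (fun e : Fin 2 → ℝ => e 1) (ContinuousLinearMap.proj (R := ℝ) (φ := fun _ : Fin 2 => ℝ) 1) xo :=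
    hasFDerivAt_apply (𝕜 := ℝ) 1 xo
  have hQ0 := (hproj0.mul hproj0).add (hproj1.mul hproj1)
  have heq : (fun e : Fin 2 → ℝ => e ⬝ᵥ e) = fun e => e 0 * e 0 + e 1 * e 1 := by
    funext e; simp [dotProduct, Fin.sum_univ_two]
  change HasFDerivAt (fun e : Fin 2 → ℝ => e 0 * e 0 + e 1 * e 1) _ xo at hQ0
  rw [show (fun e : Fin 2 → ℝ => e 0 * e 0 + e 1 * e 1) = fun e : Fin 2 → ℝ => e ⬝ᵥ e from heq.symm] at hQ0
  have hSl : HasFDerivAt (fun e : Fin 2 → ℝ => !![0, 1; -1, 0] *ᵥ e)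
      (LinearMap.toContinuousLinearMap (Matrix.mulVecLin !![(0:ℝ), 1; -1, 0])) xo :=
    (LinearMap.toContinuousLinearMap (Matrix.mulVecLin !![(0:ℝ), 1; -1, 0])).hasFDerivAt
  have hid : HasFDerivAt (fun e : Fin 2 → ℝ => e) (ContinuousLinearMap.id ℝ (Fin 2 → ℝ)) xo :=
    hasFDerivAt_id xo
  have hinv := (hasFDerivAt_inv hq).comp (f := fun e : Fin 2 → ℝ => e ⬝ᵥ e) xo hQ0
  have htotal :=
    ((((hasFDerivAt_dot (Smat *ᵥ vo) xo).mul hinv).sub_const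
        (xo ⬝ᵥ (Smat *ᵥ vo) * (xo ⬝ᵥ xo)⁻¹)).smul hSl).add
      ((((hasFDerivAt_dot vo xo).mul hinv).sub_const (xo ⬝ᵥ vo * (xo ⬝ᵥ xo)⁻¹)).smul hid)
  simp only [div_eq_mul_inv]
  refine ⟨LinearMap.toContinuousLinearMap (Matrix.mulVecLin
    (((xo ⬝ᵥ xo) ^ 2)⁻¹ •
            ((xo ⬝ᵥ xo) • (-(vecMulVec (Smat *ᵥ xo) (Smat *ᵥ vo)) + vecMulVec xo vo)
              + (2 * (xo ⬝ᵥ (Smat *ᵥ vo))) • vecMulVec (Smat *ᵥ xo) xo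
              - (2 * (xo ⬝ᵥ vo)) • vecMulVec xo xo))), ?_, fun u => by
    rfl⟩
  refine htotal.congr_fderiv ?_
  refine ContinuousLinearMap.ext fun u => ?_
  funext i
  have h0 : xo 0 * xo 0 + xo 1 * xo 1 ≠ 0 := by
    have : xo ⬝ᵥ xo = xo 0 * xo 0 + xo 1 * xo 1 := by
      simp [dotProduct, Fin.sum_univ_two]
    rwa [this] at hq
  fin_cases i <;>
  · simp [Smat, Matrix.mulVecLin_apply, Matrix.mulVec, dotProduct, Fin.sum_univ_two,
      Matrix.vecMulVec_apply, Matrix.transpose_apply, Matrix.cons_val_zero, Matrix.cons_val_one,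
      Matrix.head_cons, ContinuousLinearMap.smulRight_apply, Pi.smul_apply, smul_eq_mul, Matrix.smul_apply,
      -Matrix.cons_vecMulVec, -Matrix.vecMulVec_cons]
    field_simp
    ring
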